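/- Fix p with 0 < p < 1/2 and define ρ_k by ρ_0 = 1 and ρ_{k+1} = 2p·ρ_k − (p·ρ_k)². Then for every k ≥ 0, exp(−2p/(1 − 2p)²)·(2p)^k ≤ ρ_k ≤ (2p)^k. Consequently, if (p_n) is a sequence in (0,1/2) with p_n → 0 and ρ^{(n)}_k denotes the sequence with parameter p_n, then sup_{k ≥ 0} |ρ^{(n)}_k/(2p_n)^k − 1| → 0 as n → ∞, i.e., ρ^{(n)}_k ∼ (2p_n)^k uniformly in k. -/

import Mathlib

open Filter Finset

/-- The recursion `ρ₀ = 1`, `ρ_{k+1} = 2 p ρ_k - (p ρ_k)²`. -/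
noncomputable def rho (p : ℝ) : ℕ → ℝ
  | 0 => 1
  | k + 1 => 2 * p * rho p k - (p * rho p k) ^ 2

lemma rho_prod_bounds (p : ℝ) (hp : 0 < p) (hp2 : p < 1 / 2) (k : ℕ) :
    (2 * p) ^ k * ∏ j ∈ range k, (1 - p * (2 * p) ^ j / 2) ≤ rho p k ∧
      rho p k ≤ (2 * p) ^ k := by
  have h2p : 0 < 2 * p := by linarith
  have h2p1 : 2 * p < 1 := by linarith
  have hpow : ∀ j : ℕ, (2 * p) ^ j ≤ 1 := fun j => pow_le_one₀ h2p.le h2p1.le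
  have hpowpos : ∀ j : ℕ, 0 < (2 * p) ^ j := fun j => pow_pos h2p j
  have hfac : ∀ j : ℕ, 0 < 1 - p * (2 * p) ^ j / 2 := by
    intro j
    have h1 : p * (2 * p) ^ j ≤ p * 1 := by
      exact mul_le_mul_of_nonneg_left (hpow j) hp.le
    nlinarith
  have hfacle : ∀ j : ℕ, 1 - p * (2 * p) ^ j / 2 ≤ 1 := by
    intro j
    have := (hpowpos j)
    nlinarith
  induction k with
  | zero => simp [rho]
  | succ k ih =>
    obtain ⟨hlo, hhi⟩ := ih
    have hPpos : 0 < ∏ j ∈ range k, (1 - p * (2 * p) ^ j / 2) :=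
      Finset.prod_pos fun j _ => hfac j
    have hr0 : 0 ≤ rho p k := le_trans (by positivity) hlo
    have hpr : p * rho p k ≤ p * (2 * p) ^ k :=
      mul_le_mul_of_nonneg_left hhi hp.le
    constructor
    · show (2 * p) ^ (k + 1) * ∏ j ∈ range (k + 1), (1 - p * (2 * p) ^ j / 2) ≤
        2 * p * rho p k - (p * rho p k) ^ 2
      rw [prod_range_succ, pow_succ]
      have key : (2 * p) ^ k * (∏ j ∈ range k, (1 - p * (2 * p) ^ j / 2)) *
          (1 - p * (2 * p) ^ k / 2) ≤ rho p k * (1 - p * rho p k / 2) := by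
        have h1 : 1 - p * (2 * p) ^ k / 2 ≤ 1 - p * rho p k / 2 := by linarith
        have h2 : 0 ≤ 1 - p * (2 * p) ^ k / 2 := (hfac k).le
        exact mul_le_mul hlo h1 h2 hr0
      nlinarith
    · show 2 * p * rho p k - (p * rho p k) ^ 2 ≤ (2 * p) ^ (k + 1)
      have hsq : 0 ≤ (p * rho p k) ^ 2 := sq_nonneg _
      have h3 : 2 * p * rho p k ≤ 2 * p * (2 * p) ^ k :=
        mul_le_mul_of_nonneg_left hhi h2p.le
      calc 2 * p * rho p k - (p * rho p k) ^ 2 ≤ 2 * p * (2 * p) ^ k := by linarith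
        _ = (2 * p) ^ (k + 1) := by ring

lemma exp_le_one_sub (p x : ℝ) (hp : 0 < p) (hp2 : 2 * p < 1) (hx0 : 0 ≤ x)
    (hx : x ≤ 2 * p) : Real.exp (-(x / (1 - 2 * p))) ≤ 1 - x := by
  have hd : 0 < 1 - 2 * p := by linarith
  have h1 : x / (1 - 2 * p) + 1 ≤ Real.exp (x / (1 - 2 * p)) :=
    Real.add_one_le_exp _
  have hx1 : 0 < 1 - x := by linarith
  have h2 : (1 - x)⁻¹ ≤ Real.exp (x / (1 - 2 * p)) := by
    have : (1 - x)⁻¹ ≤ x / (1 - 2 * p) + 1 := by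
      rw [inv_le_iff_one_le_mul₀ hx1, div_add' _ _ _ hd.ne', div_mul_eq_mul_div,
        le_div_iff₀ hd]
      nlinarith
    linarith
  rw [Real.exp_neg]
  have hepos : 0 < Real.exp (x / (1 - 2 * p)) := Real.exp_pos _
  exact (inv_le_comm₀ hepos hx1).mpr h2

lemma exp_le_prod (p : ℝ) (hp : 0 < p) (hp2 : p < 1 / 2) (k : ℕ) :
    Real.exp (-(2 * p) / (1 - 2 * p) ^ 2) ≤
      ∏ j ∈ range k, (1 - p * (2 * p) ^ j / 2) := by
  have h2p : 0 < 2 * p := by linarith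
  have h2p1 : 2 * p < 1 := by linarith
  have hd : 0 < 1 - 2 * p := by linarith
  have hpow : ∀ j : ℕ, (2 * p) ^ j ≤ 1 := fun j => pow_le_one₀ h2p.le h2p1.le
  have hpowpos : ∀ j : ℕ, 0 < (2 * p) ^ j := fun j => pow_pos h2p j
  have step1 : ∀ j ∈ range k,
      Real.exp (-(p * (2 * p) ^ j / 2 / (1 - 2 * p))) ≤ 1 - p * (2 * p) ^ j / 2 := by
    intro j _
    apply exp_le_one_sub p _ hp h2p1
    · positivity
    · have := hpow j; nlinarith
  have step2 : Real.exp (∑ j ∈ range k, -(p * (2 * p) ^ j / 2 / (1 - 2 * p))) ≤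
      ∏ j ∈ range k, (1 - p * (2 * p) ^ j / 2) := by
    rw [Real.exp_sum]
    exact Finset.prod_le_prod (fun j _ => (Real.exp_pos _).le) step1
  refine le_trans (Real.exp_le_exp.2 ?_) step2
  have hsum : ∑ j ∈ range k, p * (2 * p) ^ j / 2 / (1 - 2 * p) =
      (p / 2 / (1 - 2 * p)) * ∑ j ∈ range k, (2 * p) ^ j := by
    rw [Finset.mul_sum]; congr 1; ext j; ring
  have hgeom : ∑ j ∈ range k, (2 * p) ^ j ≤ 1 / (1 - 2 * p) := by
    rw [geom_sum_eq (by linarith : (2:ℝ) * p ≠ 1)]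
    have heq2 : ((2 * p) ^ k - 1) / (2 * p - 1) = (1 - (2 * p) ^ k) / (1 - 2 * p) := by
      rw [← neg_div_neg_eq]; ring_nf
    rw [heq2, div_le_div_iff₀ hd hd]
    have := (hpowpos k).le
    nlinarith
  have hgs : 0 ≤ ∑ j ∈ range k, (2 * p) ^ j :=
    Finset.sum_nonneg fun j _ => (hpowpos j).le
  have : ∑ j ∈ range k, p * (2 * p) ^ j / 2 / (1 - 2 * p) ≤
      (p / 2 / (1 - 2 * p)) * (1 / (1 - 2 * p)) := by
    rw [hsum]
    exact mul_le_mul_of_nonneg_left hgeom (by positivity)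
  have heq : (p / 2 / (1 - 2 * p)) * (1 / (1 - 2 * p)) = p / 2 / (1 - 2 * p) ^ 2 := by
    rw [sq]; field_simp
  have hsum' : ∑ j ∈ range k, -(p * (2 * p) ^ j / 2 / (1 - 2 * p)) =
      -∑ j ∈ range k, (p * (2 * p) ^ j / 2 / (1 - 2 * p)) := by
    simp
  rw [hsum', neg_div, neg_le_neg_iff]
  have hdp : (0:ℝ) < (1 - 2 * p) ^ 2 := by positivity
  have hfin : p / 2 / (1 - 2 * p) ^ 2 ≤ 2 * p / (1 - 2 * p) ^ 2 := by
    rw [div_le_div_iff₀ hdp hdp]; nlinarith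
  linarith

theorem rho_asymptotics :
    (∀ p : ℝ, 0 < p → p < 1 / 2 → ∀ k : ℕ,
      Real.exp (-(2 * p) / (1 - 2 * p) ^ 2) * (2 * p) ^ k ≤ rho p k ∧
        rho p k ≤ (2 * p) ^ k) ∧
    (∀ pn : ℕ → ℝ, (∀ n, 0 < pn n) → (∀ n, pn n < 1 / 2) →
      Tendsto pn atTop (nhds 0) →
      Tendsto (fun n => ⨆ k : ℕ, |rho (pn n) k / (2 * pn n) ^ k - 1|)
        atTop (nhds 0)) := by
  have main : ∀ p : ℝ, 0 < p → p < 1 / 2 → ∀ k : ℕ,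
      Real.exp (-(2 * p) / (1 - 2 * p) ^ 2) * (2 * p) ^ k ≤ rho p k ∧
        rho p k ≤ (2 * p) ^ k := by
    intro p hp hp2 k
    obtain ⟨hlo, hhi⟩ := rho_prod_bounds p hp hp2 k
    refine ⟨?_, hhi⟩
    have hE := exp_le_prod p hp hp2 k
    have hpk : (0:ℝ) ≤ (2 * p) ^ k := by positivity
    calc Real.exp (-(2 * p) / (1 - 2 * p) ^ 2) * (2 * p) ^ k
        = (2 * p) ^ k * Real.exp (-(2 * p) / (1 - 2 * p) ^ 2) := by ring
      _ ≤ (2 * p) ^ k * ∏ j ∈ range k, (1 - p * (2 * p) ^ j / 2) :=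
          mul_le_mul_of_nonneg_left hE hpk
      _ ≤ rho p k := hlo
  refine ⟨main, ?_⟩
  intro pn hpos hlt htend
  set b : ℕ → ℝ := fun n => 1 - Real.exp (-(2 * pn n) / (1 - 2 * pn n) ^ 2) with hbdef
  have hexple : ∀ n, Real.exp (-(2 * pn n) / (1 - 2 * pn n) ^ 2) ≤ 1 := by
    intro n
    rw [Real.exp_le_one_iff]
    have h1 : (0:ℝ) ≤ 2 * pn n / (1 - 2 * pn n) ^ 2 := by
      have := hpos n; positivity
    rw [neg_div]; linarith
  have hble : ∀ n k, |rho (pn n) k / (2 * pn n) ^ k - 1| ≤ b n := by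
    intro n k
    obtain ⟨hlo, hhi⟩ := main (pn n) (hpos n) (hlt n) k
    have hpk : 0 < (2 * pn n) ^ k := by have := hpos n; positivity
    rw [abs_le]
    constructor
    · have h1 : Real.exp (-(2 * pn n) / (1 - 2 * pn n) ^ 2) ≤
          rho (pn n) k / (2 * pn n) ^ k := by
        rw [le_div_iff₀ hpk]; exact hlo
      simp only [hbdef]; linarith
    · have h2 : rho (pn n) k / (2 * pn n) ^ k ≤ 1 := by
        rw [div_le_one hpk]; exact hhi
      simp only [hbdef]
      have := hexple n; linarith
  have hbdd : ∀ n, BddAbove (Set.range fun k => |rho (pn n) k / (2 * pn n) ^ k - 1|) :=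
    fun n => ⟨b n, by rintro x ⟨k, rfl⟩; exact hble n k⟩
  have hub : ∀ n, (⨆ k : ℕ, |rho (pn n) k / (2 * pn n) ^ k - 1|) ≤ b n :=
    fun n => ciSup_le (hble n)
  have hlb : ∀ n, (0:ℝ) ≤ ⨆ k : ℕ, |rho (pn n) k / (2 * pn n) ^ k - 1| :=
    fun n => le_trans (abs_nonneg _) (le_ciSup (hbdd n) 0)
  have hbt : Tendsto b atTop (nhds 0) := by
    have h1 : Tendsto (fun n => -(2 * pn n) / (1 - 2 * pn n) ^ 2) atTop (nhds 0) := by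
      have hnum : Tendsto (fun n => -(2 * pn n)) atTop (nhds (0:ℝ)) := by
        simpa using (htend.const_mul 2).neg
      have hden : Tendsto (fun n => (1 - 2 * pn n) ^ 2) atTop (nhds (1:ℝ)) := by
        have := ((tendsto_const_nhds (x := (1:ℝ)) (f := atTop)).sub
          (htend.const_mul 2)).pow 2
        simpa using this
      have := hnum.div hden one_ne_zero
      rw [zero_div] at this
      exact this
    have h2 : Tendsto (fun n => Real.exp (-(2 * pn n) / (1 - 2 * pn n) ^ 2)) atTop
        (nhds (1:ℝ)) := by
      have := (Real.continuous_exp.tendsto 0).comp h1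
      simpa [Function.comp_def] using this
    have := (tendsto_const_nhds (x := (1:ℝ)) (f := atTop)).sub h2
    simpa [hbdef] using this
  exact tendsto_of_tendsto_of_tendsto_of_le_of_le tendsto_const_nhds hbt hlb hub
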